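/- arXiv:1507.08389 — 2 statements merged into one kernel-verified Lean document; each statement's English description precedes it below -/
import Mathlib

section
/- Let R be a commutative Noetherian ring and S a common multiplicatively closed subset of R, i.e., S is nonempty and for all r, s ∈ S there exists t ∈ S with t ∈ Rr ∩ Rs. Let τ_S denote the covariant R-linear functor on finitely generated R-modules given by τ_S(M) = {m ∈ M : rm = 0 for some r ∈ S}. Then the following are equivalent: (a) τ_S is representable, i.e., naturally isomorphic to Hom_R(L,−) for some finitely generated R-module L; (b) τ_S is finitely generated; (c) S is coprincipal, i.e., there exists s ∈ S with s ∈ ⋂_{r∈S} Rr. -/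
open CategoryTheory

universe u

/-- A covariant `R`-linear functor `F` on finitely generated `R`-modules is
*representable* if it is naturally isomorphic to `h_L = Hom_R(L, -)` for some finitely
generated `R`-module `L`. -/
def CategoryTheory.Functor.IsRepresentableFunctor {R : Type u} [CommRing R]
    (F : FGModuleCat R ⥤ FGModuleCat R) : Prop :=
  ∃ (L : FGModuleCat R) (e : ∀ X : FGModuleCat R, (L ⟶ X) ≃ₗ[R] F.obj X),
    ∀ (X Y : FGModuleCat R) (g : X ⟶ Y) (φ : L ⟶ X), F.map g (e X φ) = e Y (φ ≫ g)

/-- A covariant `R`-linear functor `F` on finitely generated `R`-modules is *finitely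
generated* if there is an objectwise surjective natural transformation `h_L → F`
for some finitely generated `R`-module `L`. -/
def CategoryTheory.Functor.IsFinitelyGeneratedFunctor {R : Type u} [CommRing R]
    (F : FGModuleCat R ⥤ FGModuleCat R) : Prop :=
  ∃ (L : FGModuleCat R) (T : ∀ X : FGModuleCat R, (L ⟶ X) →ₗ[R] F.obj X),
    (∀ (X Y : FGModuleCat R) (g : X ⟶ Y) (φ : L ⟶ X), F.map g (T X φ) = T Y (φ ≫ g)) ∧
    (∀ X : FGModuleCat R, Function.Surjective (T X))

/-- A subset `S ⊆ R` is *common multiplicatively closed* if it is nonempty and for all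
`r, s ∈ S` there is `t ∈ S` with `t ∈ Rr ∩ Rs`. -/
def IsCommonMultClosed {R : Type u} [CommRing R] (S : Set R) : Prop :=
  S.Nonempty ∧ ∀ r ∈ S, ∀ s ∈ S, ∃ t ∈ S, (∃ a : R, t = a * r) ∧ (∃ b : R, t = b * s)

/-- For a common multiplicatively closed subset `S ⊆ R`, the `S`-torsion
`τ_S(M) = {m ∈ M : rm = 0 for some r ∈ S}` is a submodule of `M`. -/
def tauSub {R : Type u} [CommRing R] (S : Set R) (hS : IsCommonMultClosed S)
    (M : Type u) [AddCommGroup M] [Module R M] : Submodule R M where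
  carrier := {m | ∃ r ∈ S, r • m = 0}
  zero_mem' := ⟨hS.1.choose, hS.1.choose_spec, smul_zero _⟩
  add_mem' := by
    rintro m m' ⟨r, hr, hrm⟩ ⟨s, hs, hsm⟩
    obtain ⟨t, ht, ⟨a, rfl⟩, ⟨b, hb⟩⟩ := hS.2 r hr s hs
    refine ⟨a * r, ht, ?_⟩
    rw [smul_add, mul_smul, hrm, smul_zero, hb, mul_smul, hsm, smul_zero, add_zero]
  smul_mem' := by
    rintro c m ⟨r, hr, hrm⟩
    exact ⟨r, hr, by rw [smul_comm, hrm, smul_zero]⟩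

lemma tauSub_map {R : Type u} [CommRing R] (S : Set R) (hS : IsCommonMultClosed S)
    {M N : Type u} [AddCommGroup M] [Module R M] [AddCommGroup N] [Module R N]
    (f : M →ₗ[R] N) : ∀ x ∈ tauSub S hS M, f x ∈ tauSub S hS N := by
  rintro x ⟨r, hr, hrx⟩
  exact ⟨r, hr, by rw [← map_smul, hrx, map_zero]⟩

/-- The torsion functor `τ_S` on finitely generated `R`-modules, for a common
multiplicatively closed subset `S ⊆ R`, with `τ_S(f)` the restriction of `f`. -/
noncomputable def tauFunctor (R : Type u) [CommRing R] [IsNoetherianRing R]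
    (S : Set R) (hS : IsCommonMultClosed S) : FGModuleCat R ⥤ FGModuleCat R where
  obj X := FGModuleCat.of R (tauSub S hS X)
  map {X Y} f := FGModuleCat.ofHom (LinearMap.restrict f.hom.hom (tauSub_map S hS f.hom.hom))
  map_id X := by ext x; rfl
  map_comp f g := by ext x; rfl


private lemma mk_one_smul' {R : Type u} [CommRing R] (I : Ideal R) (t : R) :
    t • (Ideal.Quotient.mk I 1 : R ⧸ I) = Ideal.Quotient.mk I t := by
  show t • (Submodule.Quotient.mk (1:R) : R ⧸ I) = Submodule.Quotient.mk t
  rw [← Submodule.Quotient.mk_smul, smul_eq_mul, mul_one]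

/-- The evaluation map `Hom(R/(s), X) → τ_S(X)`, `φ ↦ φ(1̄)`. -/
noncomputable def evHom {R : Type u} [CommRing R] [IsNoetherianRing R]
    (S : Set R) (hS : IsCommonMultClosed S) (s : R) (hs : s ∈ S)
    (X : FGModuleCat R) :
    (FGModuleCat.of R (R ⧸ Ideal.span {s}) ⟶ X) →ₗ[R] ↥(tauSub S hS X) where
  toFun φ := ⟨φ (Ideal.Quotient.mk (Ideal.span {s}) 1), s, hs, by
    rw [← map_smul, mk_one_smul', show (Ideal.Quotient.mk (Ideal.span {s}) s :
      R ⧸ Ideal.span {s}) = 0 from Ideal.Quotient.eq_zero_iff_mem.2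
      (Ideal.mem_span_singleton_self s), map_zero]⟩
  map_add' φ ψ := rfl
  map_smul' c φ := rfl

lemma evHom_bijective {R : Type u} [CommRing R] [IsNoetherianRing R]
    (S : Set R) (hS : IsCommonMultClosed S) (s : R) (hs : s ∈ S)
    (hdiv : ∀ r ∈ S, ∃ a : R, s = a * r) (X : FGModuleCat R) :
    Function.Bijective (evHom S hS s hs X) := by
  constructor
  · intro φ ψ h
    have h1 : φ (Ideal.Quotient.mk (Ideal.span {s}) 1)
        = ψ (Ideal.Quotient.mk (Ideal.span {s}) 1) := congrArg Subtype.val h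
    apply ConcreteCategory.hom_ext
    intro x
    obtain ⟨y, rfl⟩ := Ideal.Quotient.mk_surjective x
    rw [show (Ideal.Quotient.mk (Ideal.span {s}) y : R ⧸ Ideal.span {s})
      = y • Ideal.Quotient.mk (Ideal.span {s}) 1 from (mk_one_smul' _ y).symm,
      map_smul, map_smul]
    exact congrArg (HSMul.hSMul y) h1
  · rintro ⟨m, hm⟩
    have hsm : s • m = 0 := by
      obtain ⟨r, hr, hrm⟩ := hm
      obtain ⟨a, ha⟩ := hdiv r hr
      rw [ha, mul_smul, hrm, smul_zero]
    have hle : Ideal.span {s} ≤ LinearMap.ker (LinearMap.toSpanSingleton R X m) := by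
      rw [Ideal.span_le]
      rintro t ht
      rw [Set.mem_singleton_iff] at ht
      subst ht
      exact hsm
    refine ⟨FGModuleCat.ofHom (Submodule.liftQ (Ideal.span {s}) (LinearMap.toSpanSingleton R X m) hle), ?_⟩
    apply Subtype.ext
    show (Submodule.liftQ (Ideal.span {s}) (LinearMap.toSpanSingleton R X m) hle)
      (Ideal.Quotient.mk (Ideal.span {s}) 1) = m
    rw [show (Ideal.Quotient.mk (Ideal.span {s}) 1 : R ⧸ Ideal.span {s})
      = Submodule.Quotient.mk 1 from rfl, Submodule.liftQ_apply]
    exact one_smul R m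

/-- Let `R` be a commutative Noetherian ring and `S` a common
multiplicatively closed subset of `R`.  The following are equivalent: (a) `τ_S` is
representable; (b) `τ_S` is finitely generated; (c) `S` is coprincipal, i.e. there is
`s ∈ S` with `s ∈ ⋂_{r ∈ S} Rr`. -/
theorem tauFunctor_representable_tfae
    {R : Type u} [CommRing R] [IsNoetherianRing R] (S : Set R)
    (hS : IsCommonMultClosed S) :
    List.TFAE [(tauFunctor R S hS).IsRepresentableFunctor,
      (tauFunctor R S hS).IsFinitelyGeneratedFunctor,
      ∃ s ∈ S, ∀ r ∈ S, ∃ a : R, s = a * r] := by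
  tfae_have 1 → 2 := by
    rintro ⟨L, e, hnat⟩
    exact ⟨L, fun X => (e X).toLinearMap, hnat, fun X => (e X).surjective⟩
  tfae_have 2 → 3 := by
    rintro ⟨L, T, hnat, hsurj⟩
    obtain ⟨s, hs, hsξ⟩ := Subtype.property (T L (𝟙 L))
    refine ⟨s, hs, fun r hr => ?_⟩
    set X : FGModuleCat R := FGModuleCat.of R (R ⧸ Ideal.span {r}) with hX
    have hm : (Ideal.Quotient.mk (Ideal.span {r}) 1 : R ⧸ Ideal.span {r})
        ∈ tauSub S hS X :=
      ⟨r, hr, by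
        rw [mk_one_smul', Ideal.Quotient.eq_zero_iff_mem]
        exact Ideal.mem_span_singleton_self r⟩
    obtain ⟨φ, hφ⟩ := hsurj X ⟨_, hm⟩
    have hnat' := hnat L X φ (𝟙 L)
    rw [Category.id_comp, hφ] at hnat'
    have h1 : φ (Subtype.val (T L (𝟙 L))) = Ideal.Quotient.mk (Ideal.span {r}) 1 :=
      congrArg Subtype.val hnat'
    have h2 : (Ideal.Quotient.mk (Ideal.span {r}) s : R ⧸ Ideal.span {r}) = 0 := by
      rw [← mk_one_smul', ← h1,
        show s • φ (Subtype.val (T L (𝟙 L))) = φ (s • (Subtype.val (T L (𝟙 L)) : L))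
          from (map_smul φ.hom.hom s _).symm, hsξ, map_zero]
    rw [Ideal.Quotient.eq_zero_iff_mem, Ideal.mem_span_singleton'] at h2
    obtain ⟨a, ha⟩ := h2
    exact ⟨a, ha.symm⟩
  tfae_have 3 → 1 := by
    rintro ⟨s, hs, hdiv⟩
    refine ⟨FGModuleCat.of R (R ⧸ Ideal.span {s}), fun X =>
      LinearEquiv.ofBijective (evHom S hS s hs X) (evHom_bijective S hS s hs hdiv X),
      fun X Y g φ => Subtype.ext rfl⟩
  tfae_finish
end

section
/- Let R be a commutative Noetherian ring and let A →∂_A B →∂_B C be a complex of R-modules (∂_B ∘ ∂_A = 0) with B finitely generated. Let F be the covariant R-linear functor from finitely generated R-modules to themselves arising from this complex, i.e., F(N) = ker(∂_B ⊗ id_N : B ⊗_R N → C ⊗_R N) / im(∂_A ⊗ id_N : A ⊗_R N → B ⊗_R N). Then F is coherent if and only if F is finitely generated. -/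
open CategoryTheory TensorProduct

universe u

section TensorHomology

variable {R : Type u} [CommRing R]
variable {A B C : Type u} [AddCommGroup A] [Module R A] [AddCommGroup B] [Module R B]
  [AddCommGroup C] [Module R C]

/-- The homology of `A ⊗ N → B ⊗ N → C ⊗ N` at the middle spot:
`ker(∂_B ⊗ id_N) / im(∂_A ⊗ id_N)`. -/
noncomputable def tensorHomology (dA : A →ₗ[R] B) (dB : B →ₗ[R] C)
    (N : Type u) [AddCommGroup N] [Module R N] : Type u :=
  ↥(LinearMap.ker (LinearMap.rTensor N dB)) ⧸
    (Submodule.comap (LinearMap.ker (LinearMap.rTensor N dB)).subtype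
      (LinearMap.range (LinearMap.rTensor N dA)))

noncomputable instance (dA : A →ₗ[R] B) (dB : B →ₗ[R] C)
    (N : Type u) [AddCommGroup N] [Module R N] :
    AddCommGroup (tensorHomology dA dB N) := by
  unfold tensorHomology; infer_instance

noncomputable instance (dA : A →ₗ[R] B) (dB : B →ₗ[R] C)
    (N : Type u) [AddCommGroup N] [Module R N] :
    Module R (tensorHomology dA dB N) := by
  unfold tensorHomology; infer_instance

lemma ker_map_ker (dB : B →ₗ[R] C) {N N' : Type u} [AddCommGroup N] [Module R N]
    [AddCommGroup N'] [Module R N'] (g : N →ₗ[R] N') :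
    ∀ x ∈ LinearMap.ker (LinearMap.rTensor N dB),
      (LinearMap.lTensor B g) x ∈ LinearMap.ker (LinearMap.rTensor N' dB) := by
  intro x hx
  simp only [LinearMap.mem_ker] at hx ⊢
  have h : LinearMap.rTensor N' dB ∘ₗ LinearMap.lTensor B g
      = LinearMap.lTensor C g ∘ₗ LinearMap.rTensor N dB := by
    rw [LinearMap.rTensor_comp_lTensor, LinearMap.lTensor_comp_rTensor]
  calc (LinearMap.rTensor N' dB) ((LinearMap.lTensor B g) x)
      = (LinearMap.rTensor N' dB ∘ₗ LinearMap.lTensor B g) x := rfl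
    _ = (LinearMap.lTensor C g) ((LinearMap.rTensor N dB) x) := by rw [h]; rfl
    _ = 0 := by rw [hx, map_zero]

/-- The map induced on `tensorHomology` by `g : N → N'`. -/
noncomputable def tensorHomologyMap (dA : A →ₗ[R] B) (dB : B →ₗ[R] C)
    {N N' : Type u} [AddCommGroup N] [Module R N] [AddCommGroup N'] [Module R N']
    (g : N →ₗ[R] N') :
    tensorHomology dA dB N →ₗ[R] tensorHomology dA dB N' :=
  Submodule.mapQ _ _
    (LinearMap.restrict (LinearMap.lTensor B g) (ker_map_ker dB g))
    (by
      rintro ⟨x, hxk⟩ hx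
      simp only [Submodule.mem_comap, LinearMap.mem_range] at hx ⊢
      obtain ⟨y, hy⟩ := hx
      refine ⟨LinearMap.lTensor A g y, ?_⟩
      have h : LinearMap.rTensor N' dA ∘ₗ LinearMap.lTensor A g
          = LinearMap.lTensor B g ∘ₗ LinearMap.rTensor N dA := by
        rw [LinearMap.rTensor_comp_lTensor, LinearMap.lTensor_comp_rTensor]
      have h2 : (LinearMap.rTensor N' dA) ((LinearMap.lTensor A g) y)
          = (LinearMap.lTensor B g) ((LinearMap.rTensor N dA) y) := by
        calc (LinearMap.rTensor N' dA) ((LinearMap.lTensor A g) y)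
            = (LinearMap.rTensor N' dA ∘ₗ LinearMap.lTensor A g) y := rfl
          _ = _ := by rw [h]; rfl
      rw [h2, hy]
      rfl)

noncomputable instance [IsNoetherianRing R] [Module.Finite R B]
    (dA : A →ₗ[R] B) (dB : B →ₗ[R] C)
    (N : Type u) [AddCommGroup N] [Module R N] [Module.Finite R N] :
    Module.Finite R (tensorHomology dA dB N) := by
  unfold tensorHomology; infer_instance

/-- The functor arising from the middle finite complex `A → B → C`, sending a finitely
generated module `N` to the homology of `A ⊗ N → B ⊗ N → C ⊗ N`. -/
noncomputable def tensorHomologyFunctor [IsNoetherianRing R] [Module.Finite R B]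
    (dA : A →ₗ[R] B) (dB : B →ₗ[R] C) : FGModuleCat R ⥤ FGModuleCat R where
  obj X := FGModuleCat.of R (tensorHomology dA dB X)
  map {X Y} g := FGModuleCat.ofHom (tensorHomologyMap dA dB g.hom.hom)
  map_id X := by
    apply FGModuleCat.hom_ext
    apply Submodule.linearMap_qext
    ext x
    show Submodule.Quotient.mk _ = Submodule.Quotient.mk _
    congr 1
    ext
    exact DFunLike.congr_fun (LinearMap.lTensor_id B (↥X)) x.val
  map_comp {X Y Z} g h := by
    apply FGModuleCat.hom_ext
    apply Submodule.linearMap_qext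
    ext x
    show Submodule.Quotient.mk _ = Submodule.Quotient.mk _
    congr 1
    ext
    exact DFunLike.congr_fun (LinearMap.lTensor_comp B h.hom.hom g.hom.hom) x.val

end TensorHomology

/-- A covariant `R`-linear functor `F` on finitely generated `R`-modules is *coherent*
if there are finitely generated `R`-modules `K`, `L` and natural transformations
`h_L → h_K → F` forming an objectwise exact sequence `h_L(X) → h_K(X) → F(X) → 0`. -/
def CategoryTheory.Functor.IsCoherentFunctor {R : Type u} [CommRing R]
    (F : FGModuleCat R ⥤ FGModuleCat R) : Prop :=
  ∃ (K L : FGModuleCat R) (f : K ⟶ L) (T : ∀ X : FGModuleCat R, (K ⟶ X) →ₗ[R] F.obj X),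
    (∀ (X Y : FGModuleCat R) (g : X ⟶ Y) (φ : K ⟶ X), F.map g (T X φ) = T Y (φ ≫ g)) ∧
    (∀ X : FGModuleCat R, Function.Surjective (T X)) ∧
    (∀ (X : FGModuleCat R) (φ : K ⟶ X), T X φ = 0 ↔ ∃ ψ : L ⟶ X, φ = f ≫ ψ)

namespace CoherentAux
variable {R : Type u} [CommRing R]

noncomputable def ev {n : ℕ} (X : Type u) [AddCommGroup X] [Module R X] (j : Fin n) :
    ((Fin n → R) ⊗[R] X) →ₗ[R] X :=
  (TensorProduct.lid R X).toLinearMap ∘ₗ LinearMap.rTensor X (LinearMap.proj j)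

lemma ev_tmul {n : ℕ} {X : Type u} [AddCommGroup X] [Module R X] (j : Fin n)
    (v : Fin n → R) (x : X) : ev X j (v ⊗ₜ x) = v j • x := by
  simp [ev]

lemma decomp {n : ℕ} {X : Type u} [AddCommGroup X] [Module R X]
    (t : (Fin n → R) ⊗[R] X) :
    t = ∑ j, (Pi.single j (1 : R)) ⊗ₜ[R] ev X j t := by
  induction t with
  | zero => simp
  | tmul v x =>
    have h1 : ∀ j : Fin n, (Pi.single j (1 : R)) ⊗ₜ[R] ev X j (v ⊗ₜ x)
        = ((Pi.single j (v j) : Fin n → R)) ⊗ₜ[R] x := by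
      intro j
      rw [ev_tmul, tmul_smul, smul_tmul']
      congr 1
      rw [← Pi.single_smul, smul_eq_mul, mul_one]
    rw [Finset.sum_congr rfl fun j _ => h1 j, ← TensorProduct.sum_tmul,
      Finset.univ_sum_single]
  | add a b ha hb =>
    conv_lhs => rw [ha, hb]
    rw [← Finset.sum_add_distrib]
    refine Finset.sum_congr rfl fun j _ => ?_
    rw [map_add, TensorProduct.tmul_add]

lemma ev_sum_single {n : ℕ} {X : Type u} [AddCommGroup X] [Module R X]
    (x : Fin n → X) (i : Fin n) :
    ev X i (∑ j, (Pi.single j (1 : R)) ⊗ₜ[R] x j) = x i := by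
  rw [map_sum]
  have h : ∀ j : Fin n, ev X i ((Pi.single j (1 : R)) ⊗ₜ[R] x j)
      = if j = i then x j else 0 := by
    intro j
    rw [ev_tmul, Pi.single_apply]
    split
    · simp_all
    · simp_all [eq_comm]
  rw [Finset.sum_congr rfl fun j _ => h j, Finset.sum_ite_eq']
  simp

lemma rTensor_single_sum {m n : ℕ} {X : Type u} [AddCommGroup X] [Module R X]
    (p : Fin m → (Fin n → R)) (y : Fin m → X) :
    LinearMap.rTensor X (Fintype.linearCombination R p)
        (∑ i, (Pi.single i (1 : R)) ⊗ₜ[R] y i)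
      = ∑ j, (Pi.single j (1 : R)) ⊗ₜ[R] (∑ i, p i j • y i) := by
  rw [map_sum]
  have h1 : ∀ i, LinearMap.rTensor X (Fintype.linearCombination R p)
      ((Pi.single i (1 : R)) ⊗ₜ[R] y i)
      = ∑ j, (Pi.single j (1 : R)) ⊗ₜ[R] (p i j • y i) := by
    intro i
    have hP : Fintype.linearCombination R p (Pi.single i (1 : R)) = p i := by
      rw [Fintype.linearCombination_apply_single, one_smul]
    rw [LinearMap.rTensor_tmul, hP]
    conv_lhs => rw [decomp ((p i) ⊗ₜ[R] y i)]
    exact Finset.sum_congr rfl fun j _ => by rw [ev_tmul]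
  rw [Finset.sum_congr rfl fun i _ => h1 i, Finset.sum_comm]
  exact Finset.sum_congr rfl fun j _ => by rw [← TensorProduct.tmul_sum]

lemma exists_factor [IsNoetherianRing R] {M K : Type u}
    [AddCommGroup M] [Module R M] [Module.Finite R M]
    [AddCommGroup K] [Module R K] [Module.Finite R K] (ξ : M ⊗[R] K) :
    ∃ (L : Type u) (_ : AddCommGroup L) (_ : Module R L) (_ : Module.Finite R L)
      (f : K →ₗ[R] L), ∀ (X : Type u) [AddCommGroup X] [Module R X] (φ : K →ₗ[R] X),
        LinearMap.lTensor M φ ξ = 0 ↔ ∃ ψ : L →ₗ[R] X, φ = ψ ∘ₗ f := by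
  classical
  obtain ⟨n, b, hb⟩ := Module.Finite.exists_fin (R := R) (M := M)
  set q : (Fin n → R) →ₗ[R] M := Fintype.linearCombination R b with hqdef
  have hqsurj : Function.Surjective q := by
    rw [← LinearMap.range_eq_top, hqdef, Fintype.range_linearCombination, hb]
  obtain ⟨m, p, hp⟩ := Submodule.fg_iff_exists_fin_generating_family.mp
    (IsNoetherian.noetherian (LinearMap.ker q))
  obtain ⟨ξ', hξ'⟩ := LinearMap.rTensor_surjective K hqsurj ξ
  set k : Fin n → K := fun j => ev K j ξ' with hkdef
  set P : (Fin m → R) →ₗ[R] (Fin n → R) := Fintype.linearCombination R p with hPdef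
  have hPrange : LinearMap.range P = LinearMap.ker q := by
    rw [hPdef, Fintype.range_linearCombination, hp]
  have key : ∀ (X : Type u) [AddCommGroup X] [Module R X] (φ : K →ₗ[R] X),
      LinearMap.lTensor M φ ξ = 0 ↔ ∃ y : Fin m → X, ∀ j, φ (k j) = ∑ i, p i j • y i := by
    intro X _ _ φ
    have hξ'd : LinearMap.lTensor (Fin n → R) φ ξ'
        = ∑ j, (Pi.single j (1 : R)) ⊗ₜ[R] φ (k j) := by
      conv_lhs => rw [decomp ξ']
      rw [map_sum]
      exact Finset.sum_congr rfl fun j _ => by rw [LinearMap.lTensor_tmul]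
    have hcomm : LinearMap.lTensor M φ ξ
        = LinearMap.rTensor X q (LinearMap.lTensor (Fin n → R) φ ξ') := by
      rw [← hξ']
      calc LinearMap.lTensor M φ (LinearMap.rTensor K q ξ')
          = (LinearMap.lTensor M φ ∘ₗ LinearMap.rTensor K q) ξ' := rfl
        _ = (LinearMap.rTensor X q ∘ₗ LinearMap.lTensor (Fin n → R) φ) ξ' := by
            rw [LinearMap.lTensor_comp_rTensor, LinearMap.rTensor_comp_lTensor]
        _ = _ := rfl
    have hker : LinearMap.ker (LinearMap.rTensor X q)
        = LinearMap.range (LinearMap.rTensor X P) := by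
      have hexact : Function.Exact P q := by
        rw [LinearMap.exact_iff, hPrange]
      exact (rTensor_exact X hexact hqsurj).linearMap_ker_eq
    rw [hcomm, ← LinearMap.mem_ker, hker]
    constructor
    · rintro ⟨ζ, hζ⟩
      refine ⟨fun i => ev X i ζ, fun j => ?_⟩
      have hζd : ζ = ∑ i, (Pi.single i (1 : R)) ⊗ₜ[R] ev X i ζ := decomp ζ
      have : LinearMap.rTensor X P ζ
          = ∑ j, (Pi.single j (1 : R)) ⊗ₜ[R] (∑ i, p i j • ev X i ζ) := by
        conv_lhs => rw [hζd]
        exact rTensor_single_sum p _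
      rw [this, hξ'd] at hζ
      have := congrArg (ev X j) hζ
      rwa [ev_sum_single, ev_sum_single, eq_comm] at this
    · rintro ⟨y, hy⟩
      refine ⟨∑ i, (Pi.single i (1 : R)) ⊗ₜ[R] y i, ?_⟩
      rw [rTensor_single_sum p y, hξ'd]
      exact Finset.sum_congr rfl fun j _ => by rw [hy j]
  set U : Submodule R (K × (Fin m → R)) :=
    Submodule.span R (Set.range fun j : Fin n =>
      ((k j, -(fun i => p i j)) : K × (Fin m → R))) with hUdef
  refine ⟨(K × (Fin m → R)) ⧸ U, inferInstance, inferInstance, inferInstance,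
    U.mkQ ∘ₗ LinearMap.inl R K (Fin m → R), ?_⟩
  intro X _ _ φ
  rw [key X φ]
  constructor
  · rintro ⟨y, hy⟩
    set Φ : (K × (Fin m → R)) →ₗ[R] X :=
      φ ∘ₗ LinearMap.fst R K (Fin m → R)
        + (Fintype.linearCombination R y) ∘ₗ LinearMap.snd R K (Fin m → R) with hΦdef
    have hΦval : ∀ a : K × (Fin m → R), Φ a = φ a.1 + ∑ i, a.2 i • y i := by
      intro a
      simp [hΦdef, Fintype.linearCombination_apply]
    have hU : U ≤ LinearMap.ker Φ := by
      rw [hUdef, Submodule.span_le]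
      rintro _ ⟨j, rfl⟩
      simp only [SetLike.mem_coe, LinearMap.mem_ker]
      rw [hΦval]
      simp only [Pi.neg_apply, neg_smul]
      rw [hy j]
      simp
    refine ⟨U.liftQ Φ hU, ?_⟩
    ext a
    simp only [LinearMap.coe_comp, Function.comp_apply, LinearMap.inl_apply,
      Submodule.mkQ_apply, Submodule.liftQ_apply]
    rw [hΦval]
    simp
  · rintro ⟨ψ, rfl⟩
    refine ⟨fun i => ψ (U.mkQ (0, Pi.single i 1)), fun j => ?_⟩
    have h0 : U.mkQ ((k j, -(fun i => p i j)) : K × (Fin m → R)) = 0 := by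
      rw [Submodule.mkQ_apply, Submodule.Quotient.mk_eq_zero]
      exact Submodule.subset_span ⟨j, rfl⟩
    have hsplit : ((k j, (0 : Fin m → R)) : K × (Fin m → R))
        = ((k j, -(fun i => p i j)) : K × (Fin m → R)) + (0, fun i => p i j) := by
      ext
      · simp
      · simp
    have hdec : ((0, fun i => p i j) : K × (Fin m → R))
        = ∑ i, p i j • ((0, Pi.single i 1) : K × (Fin m → R)) := by
      ext
      · simp [Prod.fst_sum]
      · simp only [Prod.snd_sum, Prod.smul_snd]
        rw [Finset.sum_congr rfl fun i _ => by
          rw [← Pi.single_smul, smul_eq_mul, mul_one]]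
        rw [Finset.univ_sum_single]
    have : (ψ ∘ₗ (U.mkQ ∘ₗ LinearMap.inl R K (Fin m → R))) (k j)
        = ψ (U.mkQ ((k j, (0 : Fin m → R)) : K × (Fin m → R))) := rfl
    rw [this, hsplit, map_add, map_add, h0, map_zero, zero_add, hdec, map_sum, map_sum]
    exact Finset.sum_congr rfl fun i _ => by rw [map_smul, map_smul]
end CoherentAux

section Iota

open TensorProduct

variable {R : Type u} [CommRing R]
variable {A B C : Type u} [AddCommGroup A] [Module R A] [AddCommGroup B] [Module R B]
  [AddCommGroup C] [Module R C]

/-- The natural injection from the homology into `(B ⧸ range dA) ⊗ X`. -/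
noncomputable def iotaTH (dA : A →ₗ[R] B) (dB : B →ₗ[R] C)
    (X : Type u) [AddCommGroup X] [Module R X] :
    tensorHomology dA dB X →ₗ[R] (B ⧸ LinearMap.range dA) ⊗[R] X :=
  Submodule.liftQ _
    (LinearMap.rTensor X (LinearMap.range dA).mkQ ∘ₗ
      (LinearMap.ker (LinearMap.rTensor X dB)).subtype)
    (by
      rintro ⟨x, hxk⟩ hx
      simp only [Submodule.mem_comap, LinearMap.mem_range, Submodule.coe_subtype] at hx
      obtain ⟨y, hy⟩ := hx
      simp only [LinearMap.mem_ker, LinearMap.coe_comp, Function.comp_apply,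
        Submodule.coe_subtype]
      rw [← hy]
      have h0 : (LinearMap.range dA).mkQ ∘ₗ dA = 0 := by
        ext a
        simp only [LinearMap.coe_comp, Function.comp_apply, Submodule.mkQ_apply,
          LinearMap.zero_apply, Submodule.Quotient.mk_eq_zero]
        exact LinearMap.mem_range_self dA a
      calc LinearMap.rTensor X (LinearMap.range dA).mkQ (LinearMap.rTensor X dA y)
          = (LinearMap.rTensor X (LinearMap.range dA).mkQ ∘ₗ LinearMap.rTensor X dA) y := rfl
        _ = LinearMap.rTensor X ((LinearMap.range dA).mkQ ∘ₗ dA) y := by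
            rw [LinearMap.rTensor_comp]
        _ = 0 := by rw [h0, LinearMap.rTensor_zero, LinearMap.zero_apply])

lemma iotaTH_injective (dA : A →ₗ[R] B) (dB : B →ₗ[R] C)
    (X : Type u) [AddCommGroup X] [Module R X] :
    Function.Injective (iotaTH dA dB X) := by
  rw [← LinearMap.ker_eq_bot, iotaTH]
  erw [Submodule.ker_liftQ_eq_bot]
  rfl
  rintro ⟨x, hxk⟩ hx
  simp only [LinearMap.mem_ker, LinearMap.coe_comp, Function.comp_apply,
    Submodule.coe_subtype] at hx
  have hexact : Function.Exact (LinearMap.rTensor X dA)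
      (LinearMap.rTensor X (LinearMap.range dA).mkQ) :=
    rTensor_exact X (LinearMap.exact_map_mkQ_range dA) (Submodule.mkQ_surjective _)
  have hker := hexact.linearMap_ker_eq
  simp only [Submodule.mem_comap, Submodule.coe_subtype]
  rw [← hker]
  exact hx

lemma iotaTH_natural (dA : A →ₗ[R] B) (dB : B →ₗ[R] C)
    {X Y : Type u} [AddCommGroup X] [Module R X] [AddCommGroup Y] [Module R Y]
    (g : X →ₗ[R] Y) (u : tensorHomology dA dB X) :
    iotaTH dA dB Y (tensorHomologyMap dA dB g u) =
      LinearMap.lTensor (B ⧸ LinearMap.range dA) g (iotaTH dA dB X u) := by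
  have : iotaTH dA dB Y ∘ₗ tensorHomologyMap dA dB g
      = LinearMap.lTensor (B ⧸ LinearMap.range dA) g ∘ₗ iotaTH dA dB X := by
    apply Submodule.linearMap_qext
    refine LinearMap.ext fun x => ?_
    show LinearMap.rTensor Y (LinearMap.range dA).mkQ (LinearMap.lTensor B g x.val)
      = LinearMap.lTensor (B ⧸ LinearMap.range dA) g
          (LinearMap.rTensor X (LinearMap.range dA).mkQ x.val)
    have hc : LinearMap.rTensor Y (LinearMap.range dA).mkQ ∘ₗ LinearMap.lTensor B g
        = LinearMap.lTensor (B ⧸ LinearMap.range dA) g ∘ₗ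
            LinearMap.rTensor X (LinearMap.range dA).mkQ := by
      rw [LinearMap.rTensor_comp_lTensor, LinearMap.lTensor_comp_rTensor]
    exact DFunLike.congr_fun hc x.val
  exact DFunLike.congr_fun this u

end Iota

/-- Let `R` be a commutative Noetherian ring and `A →∂_A B →∂_B C` a
complex of `R`-modules with `B` finitely generated.  Let `F` be the functor on finitely
generated `R`-modules arising from this complex,
`F(N) = ker(∂_B ⊗ id_N)/im(∂_A ⊗ id_N)`.  Then `F` is coherent iff it is finitely
generated. -/
theorem tensorHomologyFunctor_coherent_iff_finitelyGenerated
    {R : Type u} [CommRing R] [IsNoetherianRing R]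
    {A B C : Type u} [AddCommGroup A] [Module R A] [AddCommGroup B] [Module R B]
    [AddCommGroup C] [Module R C] [Module.Finite R B]
    (dA : A →ₗ[R] B) (dB : B →ₗ[R] C) (hcomplex : dB ∘ₗ dA = 0) :
    (tensorHomologyFunctor dA dB).IsCoherentFunctor ↔
      (tensorHomologyFunctor dA dB).IsFinitelyGeneratedFunctor := by
  constructor
  · rintro ⟨K, L, f, T, h1, h2, h3⟩
    exact ⟨K, T, h1, h2⟩
  · rintro ⟨K0, T, hnat, hsurj⟩
    -- the element of (B ⧸ range dA) ⊗ K0 representing the natural transformation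
    set ξ : (B ⧸ LinearMap.range dA) ⊗[R] (K0 : Type u) :=
      iotaTH dA dB (K0 : Type u) (T K0 (𝟙 K0) : tensorHomology dA dB K0) with hξ
    have hnat' : ∀ (X : FGModuleCat R) (φ : K0 ⟶ X),
        iotaTH dA dB (X : Type u) (T X φ : tensorHomology dA dB X)
          = LinearMap.lTensor (B ⧸ LinearMap.range dA) φ.hom.hom ξ := by
      intro X φ
      have h1 := hnat K0 X φ (𝟙 K0)
      rw [CategoryTheory.Category.id_comp] at h1
      rw [← h1]
      exact iotaTH_natural dA dB φ.hom.hom (T K0 (𝟙 K0) : tensorHomology dA dB K0)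
    obtain ⟨L', iL1, iL2, iL3, f', hf'⟩ :=
      CoherentAux.exists_factor (R := R) (M := B ⧸ LinearMap.range dA)
        (K := (K0 : Type u)) ξ
    refine ⟨K0, FGModuleCat.of R L', FGModuleCat.ofHom f', T, hnat, hsurj, ?_⟩
    intro X φ
    have hinj := iotaTH_injective dA dB (X : Type u)
    constructor
    · intro h0
      have : iotaTH dA dB (X : Type u) (T X φ : tensorHomology dA dB X) = 0 := by rw [h0]; exact map_zero _
      rw [hnat' X φ] at this
      obtain ⟨ψ, hψ⟩ := (hf' (X : Type u) φ.hom.hom).mp this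
      exact ⟨FGModuleCat.ofHom ψ, FGModuleCat.hom_ext hψ⟩
    · rintro ⟨ψ, hψ⟩
      have h0 : LinearMap.lTensor (B ⧸ LinearMap.range dA)
          φ.hom.hom ξ = 0 :=
        (hf' (X : Type u) φ.hom.hom).mpr ⟨ψ.hom.hom, by rw [hψ]; rfl⟩
      apply hinj
      rw [hnat' X φ, h0]; exact (map_zero _).symm
end
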